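/- Let Q ∈ R^{n×n} be symmetric positive definite and X = {x ∈ R^n : x^T Q x ≤ 1}. If X is standard comonotone, then Q^{-1} (equivalently Q) has all diagonal entries equal and all off-diagonal entries equal; consequently X is permutation-invariant. -/

import Mathlib

open Matrix

/-- The cone of vectors sorted in nonincreasing order along the permutation `π`. -/
def sortedCone (n : ℕ) (π : Equiv.Perm (Fin n)) : Set (Fin n → ℝ) :=
  {x | ∀ i j : Fin n, i ≤ j → x (π j) ≤ x (π i)}

/-- `X` is standard comonotone. -/
def StandardComonotone (n : ℕ) (X : Set (Fin n → ℝ)) : Prop :=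
  ∀ (π : Equiv.Perm (Fin n)) (v : Fin n → ℝ), v ∈ sortedCone n π →
    (∃ x ∈ X, ∀ y ∈ X, ∑ i, v i * y i ≤ ∑ i, v i * x i) →
    ∃ x ∈ X, (∀ y ∈ X, ∑ i, v i * y i ≤ ∑ i, v i * x i) ∧ x ∈ sortedCone n π

lemma dotSymm {n : ℕ} {Q : Matrix (Fin n) (Fin n) ℝ} (hQ : Qᵀ = Q) (u y : Fin n → ℝ) :
    u ⬝ᵥ Q *ᵥ y = y ⬝ᵥ Q *ᵥ u := by
  rw [dotProduct_mulVec, ← mulVec_transpose, hQ, dotProduct_comm]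

lemma csLem {n : ℕ} {Q : Matrix (Fin n) (Fin n) ℝ} (hQ : Q.PosSemidef) (u y : Fin n → ℝ) :
    (u ⬝ᵥ Q *ᵥ y)^2 ≤ (u ⬝ᵥ Q *ᵥ u) * (y ⬝ᵥ Q *ᵥ y) := by
  have hsym : Qᵀ = Q := by
    have := hQ.isHermitian
    rwa [Matrix.IsHermitian, Matrix.conjTranspose_eq_transpose_of_trivial] at this
  have h : ∀ t : ℝ, 0 ≤ (y ⬝ᵥ Q *ᵥ y) * (t*t) + (2*(u ⬝ᵥ Q *ᵥ y)) * t + (u ⬝ᵥ Q *ᵥ u) := by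
    intro t
    have h0 := hQ.dotProduct_mulVec_nonneg (u + t • y)
    simp only [star_trivial] at h0
    have hyu : y ⬝ᵥ Q *ᵥ u = u ⬝ᵥ Q *ᵥ y := dotSymm hsym y u
    calc (0:ℝ) ≤ (u + t • y) ⬝ᵥ Q *ᵥ (u + t • y) := h0
      _ = (y ⬝ᵥ Q *ᵥ y) * (t*t) + (2*(u ⬝ᵥ Q *ᵥ y)) * t + (u ⬝ᵥ Q *ᵥ u) := by
          rw [mulVec_add, dotProduct_add, add_dotProduct, add_dotProduct]
          rw [mulVec_smul, dotProduct_smul, smul_dotProduct, smul_dotProduct,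
            dotProduct_smul, hyu]
          ring_nf
  have hd := discrim_le_zero h
  unfold discrim at hd
  nlinarith [hd]

lemma maxProps {n : ℕ} {Q : Matrix (Fin n) (Fin n) ℝ} (hQ : Q.PosDef) (v : Fin n → ℝ)
    (hv : v ≠ 0) :
    ∃ c : ℝ, 0 < c ∧
      ((Real.sqrt c)⁻¹ • (Q⁻¹ *ᵥ v)) ⬝ᵥ Q *ᵥ ((Real.sqrt c)⁻¹ • (Q⁻¹ *ᵥ v)) ≤ 1 ∧
      (∀ y : Fin n → ℝ, y ⬝ᵥ Q *ᵥ y ≤ 1 →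
        v ⬝ᵥ y ≤ v ⬝ᵥ ((Real.sqrt c)⁻¹ • (Q⁻¹ *ᵥ v))) ∧
      (∀ x : Fin n → ℝ, x ⬝ᵥ Q *ᵥ x ≤ 1 →
        (∀ y : Fin n → ℝ, y ⬝ᵥ Q *ᵥ y ≤ 1 → v ⬝ᵥ y ≤ v ⬝ᵥ x) →
        x = (Real.sqrt c)⁻¹ • (Q⁻¹ *ᵥ v)) := by
  have hsym : Qᵀ = Q := by
    have := hQ.isHermitian
    rwa [Matrix.IsHermitian, Matrix.conjTranspose_eq_transpose_of_trivial] at this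
  set A := Q⁻¹ with hA
  have hQA : Q *ᵥ (A *ᵥ v) = v := by
    rw [hA, mulVec_mulVec, Matrix.mul_nonsing_inv _ (isUnit_iff_ne_zero.mpr hQ.det_pos.ne'),
      one_mulVec]
  set c := v ⬝ᵥ A *ᵥ v with hc
  have hcpos : 0 < c := by
    have := (hQ.inv).dotProduct_mulVec_pos hv
    simpa using this
  have hsq : Real.sqrt c * Real.sqrt c = c := Real.mul_self_sqrt hcpos.le
  have hspos : 0 < Real.sqrt c := Real.sqrt_pos.mpr hcpos
  set s := (Real.sqrt c)⁻¹ with hs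
  set xs := s • (A *ᵥ v) with hxs
  have hAvQAv : (A *ᵥ v) ⬝ᵥ Q *ᵥ (A *ᵥ v) = c := by
    rw [hQA, dotProduct_comm]
  have hval : v ⬝ᵥ xs = Real.sqrt c := by
    rw [hxs, dotProduct_smul, smul_eq_mul, ← hc, hs]
    field_simp
    rw [Real.sq_sqrt hcpos.le]
  have hxsX : xs ⬝ᵥ Q *ᵥ xs ≤ 1 := by
    rw [hxs, mulVec_smul, dotProduct_smul, smul_dotProduct, smul_eq_mul, smul_eq_mul, hAvQAv, hs]
    rw [← mul_assoc]
    have : (Real.sqrt c)⁻¹ * (Real.sqrt c)⁻¹ * c = 1 := by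
      field_simp
      rw [Real.sq_sqrt hcpos.le]
    rw [this]
  have hbound : ∀ y : Fin n → ℝ, y ⬝ᵥ Q *ᵥ y ≤ 1 → v ⬝ᵥ y ≤ Real.sqrt c := by
    intro y hy
    have hvy : v ⬝ᵥ y = (A *ᵥ v) ⬝ᵥ Q *ᵥ y := by
      rw [dotSymm hsym, hQA, dotProduct_comm v y]
    have hcs := csLem hQ.posSemidef (A *ᵥ v) y
    rw [hAvQAv] at hcs
    have h1 : ((A *ᵥ v) ⬝ᵥ Q *ᵥ y)^2 ≤ c := by
      calc ((A *ᵥ v) ⬝ᵥ Q *ᵥ y)^2 ≤ c * (y ⬝ᵥ Q *ᵥ y) := hcs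
        _ ≤ c * 1 := by exact mul_le_mul_of_nonneg_left hy hcpos.le
        _ = c := mul_one c
    rw [hvy]
    nlinarith [Real.sq_sqrt hcpos.le, Real.sqrt_nonneg c,
      sq_nonneg ((A *ᵥ v) ⬝ᵥ Q *ᵥ y - Real.sqrt c)]
  refine ⟨c, hcpos, hxsX, ?_, ?_⟩
  · intro y hy; rw [hval]; exact hbound y hy
  · intro x hxX hxmax
    have hvx : v ⬝ᵥ x = Real.sqrt c := by
      have h1 := hxmax xs hxsX
      rw [hval] at h1
      exact le_antisymm (hbound x hxX) h1
    have hxsQx : xs ⬝ᵥ Q *ᵥ x = 1 := by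
      rw [hxs, smul_dotProduct, smul_eq_mul]
      have : (A *ᵥ v) ⬝ᵥ Q *ᵥ x = v ⬝ᵥ x := by
        rw [dotSymm hsym, hQA, dotProduct_comm]
      rw [this, hvx, hs]
      field_simp
    have hxsQxs : xs ⬝ᵥ Q *ᵥ xs = 1 := by
      rw [hxs, mulVec_smul, dotProduct_smul, smul_dotProduct, smul_eq_mul, smul_eq_mul, hAvQAv, hs]
      rw [← mul_assoc]
      field_simp
      rw [Real.sq_sqrt hcpos.le]
    have hxQxs : x ⬝ᵥ Q *ᵥ xs = 1 := by rw [dotSymm hsym]; exact hxsQx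
    have hdiff : (x - xs) ⬝ᵥ Q *ᵥ (x - xs) ≤ 0 := by
      rw [mulVec_sub, dotProduct_sub, sub_dotProduct, sub_dotProduct]
      rw [hxsQx, hxQxs, hxsQxs]
      linarith
    by_contra hne
    have hd0 : x - xs ≠ 0 := sub_ne_zero.mpr hne
    have := hQ.dotProduct_mulVec_pos hd0
    simp only [star_trivial] at this
    linarith

lemma exists_cone {n : ℕ} (v : Fin n → ℝ) : ∃ π : Equiv.Perm (Fin n), v ∈ sortedCone n π := by
  refine ⟨Tuple.sort (-v), fun i j hij => ?_⟩
  have := Tuple.monotone_sort (-v) hij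
  simpa using this

lemma cone_swap {n : ℕ} (v : Fin n → ℝ) (i0 j0 : Fin n) (hv : v i0 = v j0)
    (π : Equiv.Perm (Fin n)) (h : v ∈ sortedCone n π) :
    v ∈ sortedCone n (Equiv.swap i0 j0 * π) := by
  intro i j hij
  have hsw : ∀ k, v (Equiv.swap i0 j0 k) = v k := by
    intro k
    rcases eq_or_ne k i0 with rfl | h1
    · simp [Equiv.swap_apply_left, hv]
    rcases eq_or_ne k j0 with rfl | h2
    · simp [Equiv.swap_apply_right, hv]
    · rw [Equiv.swap_apply_of_ne_of_ne h1 h2]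
  simpa [Equiv.Perm.mul_apply, hsw] using h i j hij

lemma two_cones_eq {n : ℕ} (x : Fin n → ℝ) (i0 j0 : Fin n) (π : Equiv.Perm (Fin n))
    (h1 : x ∈ sortedCone n π) (h2 : x ∈ sortedCone n (Equiv.swap i0 j0 * π)) :
    x i0 = x j0 := by
  set a := π⁻¹ i0 with ha
  set b := π⁻¹ j0 with hb
  have hpa : π a = i0 := by simp [ha]
  have hpb : π b = j0 := by simp [hb]
  rcases le_total a b with hab | hab
  · have e1 := h1 a b hab
    have e2 := h2 a b hab
    rw [hpa, hpb] at e1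
    simp only [Equiv.Perm.mul_apply, hpa, hpb, Equiv.swap_apply_left, Equiv.swap_apply_right] at e2
    exact le_antisymm e2 e1
  · have e1 := h1 b a hab
    have e2 := h2 b a hab
    rw [hpa, hpb] at e1
    simp only [Equiv.Perm.mul_apply, hpa, hpb, Equiv.swap_apply_left, Equiv.swap_apply_right] at e2
    exact le_antisymm e1 e2

lemma keyLem {n : ℕ} {Q : Matrix (Fin n) (Fin n) ℝ} (hQ : Q.PosDef)
    (hco : StandardComonotone n {x | x ⬝ᵥ Q *ᵥ x ≤ 1})
    (v : Fin n → ℝ) (i0 j0 : Fin n) (hv : v i0 = v j0) :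
    (Q⁻¹ *ᵥ v) i0 = (Q⁻¹ *ᵥ v) j0 := by
  rcases eq_or_ne v 0 with rfl | hv0
  · simp
  obtain ⟨c, hc, hxsX, hmax, huniq⟩ := maxProps hQ v hv0
  set xs := (Real.sqrt c)⁻¹ • (Q⁻¹ *ᵥ v) with hxs
  obtain ⟨π, hπ⟩ := exists_cone v
  have hX : ∀ π', v ∈ sortedCone n π' → xs ∈ sortedCone n π' := by
    intro π' hmem
    obtain ⟨x, hx1, hx2, hx3⟩ := hco π' v hmem ⟨xs, hxsX, fun y hy => hmax y hy⟩
    have : x = xs := huniq x hx1 (fun y hy => hx2 y hy)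
    rwa [← this]
  have hxs1 := hX π hπ
  have hxs2 := hX _ (cone_swap v i0 j0 hv π hπ)
  have heq := two_cones_eq xs i0 j0 π hxs1 hxs2
  have hspos : (0:ℝ) < Real.sqrt c := Real.sqrt_pos.mpr hc
  rw [hxs] at heq
  simp only [Pi.smul_apply, smul_eq_mul] at heq
  exact mul_left_cancel₀ (by positivity) heq

/-- If the centered ellipsoid `X = {x : xᵀQx ≤ 1}` (with `Q` symmetric positive
definite) is standard comonotone, then all diagonal entries of `Q⁻¹` are equal, all
off-diagonal entries of `Q⁻¹` are equal, and consequently `X` is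
permutation-invariant. -/
theorem stmt_10 (n : ℕ) (Q : Matrix (Fin n) (Fin n) ℝ) (hQ : Q.PosDef)
    (X : Set (Fin n → ℝ)) (hXdef : X = {x | x ⬝ᵥ (Q *ᵥ x) ≤ 1})
    (hco : StandardComonotone n X) :
    (∀ i j : Fin n, Q⁻¹ i i = Q⁻¹ j j) ∧
    (∀ i j k l : Fin n, i ≠ j → k ≠ l → Q⁻¹ i j = Q⁻¹ k l) ∧
    (∀ x ∈ X, ∀ σ : Equiv.Perm (Fin n), (fun i => x (σ i)) ∈ X) := by
  subst hXdef
  have key := keyLem hQ hco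
  have hAsym : ∀ i j, Q⁻¹ i j = Q⁻¹ j i := by
    intro i j
    have h := (hQ.inv).1
    have := congrFun (congrFun h j) i
    simpa [conjTranspose_apply] using this
  -- off-diagonal entries within a column are equal
  have single_key : ∀ m i j : Fin n, i ≠ m → j ≠ m → Q⁻¹ i m = Q⁻¹ j m := by
    intro m i j him hjm
    have hv : (Pi.single m 1 : Fin n → ℝ) i = (Pi.single m 1 : Fin n → ℝ) j := by
      rw [Pi.single_eq_of_ne him, Pi.single_eq_of_ne hjm]
    have hk := key (Pi.single m 1 : Fin n → ℝ) i j hv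
    rw [mulVec_single] at hk
    simpa using hk
  -- diagonal entries are equal
  have hdiag : ∀ i j : Fin n, Q⁻¹ i i = Q⁻¹ j j := by
    intro i j
    rcases eq_or_ne i j with rfl | hij
    · rfl
    set v : Fin n → ℝ := Pi.single i 1 + Pi.single j 1 with hvdef
    have hv : v i = v j := by
      simp [hvdef, Pi.single_eq_of_ne hij, Pi.single_eq_of_ne hij.symm]
    have hk := key v i j hv
    rw [hvdef, mulVec_add, mulVec_single, mulVec_single] at hk
    simp only [Pi.add_apply, mul_one, MulOpposite.op_one, one_smul, col_apply] at hk
    have := hAsym i j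
    linarith [hk, hAsym i j]
  have hoff : ∀ i j k l : Fin n, i ≠ j → k ≠ l → Q⁻¹ i j = Q⁻¹ k l := by
    intro i j k l hij hkl
    rcases eq_or_ne j l with rfl | hjl
    · exact single_key j i k hij hkl
    · calc Q⁻¹ i j = Q⁻¹ l j := single_key j i l hij hjl.symm
        _ = Q⁻¹ j l := hAsym l j
        _ = Q⁻¹ k l := single_key l j k hjl hkl
  refine ⟨hdiag, hoff, ?_⟩
  -- permutation invariance
  have hAsub : ∀ σ : Equiv.Perm (Fin n), (Q⁻¹).submatrix σ σ = Q⁻¹ := by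
    intro σ
    ext i j
    rcases eq_or_ne i j with rfl | hij
    · exact hdiag (σ i) i
    · exact hoff (σ i) (σ j) i j (fun h => hij (σ.injective h)) hij
  have hQsub : ∀ σ : Equiv.Perm (Fin n), Q.submatrix σ σ = Q := by
    intro σ
    have hQinv : Q⁻¹⁻¹ = Q :=
      Matrix.nonsing_inv_nonsing_inv _ (isUnit_iff_ne_zero.mpr hQ.det_pos.ne')
    calc Q.submatrix σ σ = (Q⁻¹⁻¹).submatrix σ σ := by rw [hQinv]
      _ = ((Q⁻¹).submatrix σ σ)⁻¹ := by rw [Matrix.inv_submatrix_equiv]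
      _ = (Q⁻¹)⁻¹ := by rw [hAsub]
      _ = Q := hQinv
  intro x hx σ
  have hx' : x ⬝ᵥ Q *ᵥ x ≤ 1 := hx
  show (fun i => x (σ i)) ⬝ᵥ Q *ᵥ (fun i => x (σ i)) ≤ 1
  have h1 : Q *ᵥ (fun i => x (σ i)) = fun i => (Q *ᵥ x) (σ i) := by
    conv_lhs => rw [← hQsub σ]
    rw [show (fun i => x (σ i)) = x ∘ σ from rfl, submatrix_mulVec_equiv]
    have : (x ∘ ⇑σ) ∘ ⇑σ.symm = x := by
      funext k; simp
    rw [this]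
    rfl
  rw [h1]
  have h2 : (fun i => x (σ i)) ⬝ᵥ (fun i => (Q *ᵥ x) (σ i)) = x ⬝ᵥ (Q *ᵥ x) := by
    simp only [dotProduct]
    exact Equiv.sum_comp σ (fun i => x i * (Q *ᵥ x) i)
  rw [h2]
  exact hx'
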